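/- Let τ_mid : L → V_mid* and τ : L → V_bow ∘ V_mid* be two injective word-level tokenisers, where τ(w) is τ_mid(w) with its first symbol replaced by a bow-marked variant (formally: there is a bijection β : V_mid → V_bow with τ(w) = β(τ_mid(w)_1) ∘ τ_mid(w)_{2:}). Define T : L* → V* by T(w_1…w_n) = τ_mid(w_1) ∘ τ(w_2) ∘ … ∘ τ(w_n) (first word unmarked). Then T is injective. -/

import Mathlib

/-- Concatenative extension of a tokeniser pair where the first word of a
sequence is tokenised with `τmid` (unmarked) and all later words with `τ`. -/
def firstUnmarkedExt {L V : Type*} (τmid τ : L → List V) : List L → List V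
  | [] => []
  | w :: ws => τmid w ++ (ws.map τ).flatten

/-- Splitting lemma: a mid-only prefix followed by a bow-starting (or empty)
suffix is uniquely determined. -/
lemma split_mid_bow {V : Type*} (Vbow Vmid : Set V) (hdisj : Disjoint Vbow Vmid) :
    ∀ (xs1 xs2 ys1 ys2 : List V),
    (∀ a ∈ xs1, a ∈ Vmid) → (∀ a ∈ xs2, a ∈ Vmid) →
    (ys1 = [] ∨ ∃ b ∈ Vbow, ∃ t, ys1 = b :: t) →
    (ys2 = [] ∨ ∃ b ∈ Vbow, ∃ t, ys2 = b :: t) →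
    xs1 ++ ys1 = xs2 ++ ys2 → xs1 = xs2 ∧ ys1 = ys2 := by
  intro xs1
  induction xs1 with
  | nil =>
    intro xs2 ys1 ys2 h1 h2 b1 b2 heq
    cases xs2 with
    | nil => simpa using heq
    | cons a t =>
      exfalso
      simp only [List.nil_append, List.cons_append] at heq
      rcases b1 with rfl | ⟨b, hb, t', rfl⟩
      · exact nomatch heq
      · obtain ⟨rfl, -⟩ := List.cons.inj heq
        exact Set.disjoint_left.mp hdisj hb (h2 b (List.mem_cons_self))
  | cons a t ih =>
    intro xs2 ys1 ys2 h1 h2 b1 b2 heq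
    cases xs2 with
    | nil =>
      exfalso
      simp only [List.nil_append, List.cons_append] at heq
      rcases b2 with rfl | ⟨b, hb, t', rfl⟩
      · exact nomatch heq
      · obtain ⟨rfl, -⟩ := List.cons.inj heq
        exact Set.disjoint_left.mp hdisj hb (h1 a (List.mem_cons_self (a := a) (l := t)))
    | cons a2 t2 =>
      simp only [List.cons_append] at heq
      obtain ⟨rfl, heq'⟩ := List.cons.inj heq
      obtain ⟨h, h'⟩ := ih t2 ys1 ys2 (fun x hx => h1 x (List.mem_cons_of_mem a hx))
        (fun x hx => h2 x (List.mem_cons_of_mem a hx)) b1 b2 heq'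
      exact ⟨by rw [h], h'⟩

theorem stmt_19 {L V : Type*} (Vbow Vmid : Set V)
    (hdisj : Disjoint Vbow Vmid) (hcover : Vbow ∪ Vmid = Set.univ)
    (β : V → V) (hβ : Set.BijOn β Vmid Vbow)
    (τmid : L → List V) (hτmid : Function.Injective τmid)
    (hmidshape : ∀ w : L, τmid w ≠ [] ∧ ∀ a ∈ τmid w, a ∈ Vmid)
    (τ : L → List V) (hτ : Function.Injective τ)
    (hrel : ∀ (w : L) (a : V) (l : List V), τmid w = a :: l → τ w = β a :: l) :
    Function.Injective (firstUnmarkedExt τmid τ) := by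
  -- shape of τ
  have hτshape : ∀ w : L, ∃ b ∈ Vbow, ∃ l, τ w = b :: l ∧ ∀ x ∈ l, x ∈ Vmid := by
    intro w
    obtain ⟨hne, hmid⟩ := hmidshape w
    obtain ⟨a, l, hal⟩ := List.exists_cons_of_ne_nil hne
    refine ⟨β a, hβ.mapsTo (hmid a (hal ▸ List.mem_cons_self (a := a) (l := l))), l, hrel w a l hal, ?_⟩
    intro x hx
    exact hmid x (hal ▸ List.mem_cons_of_mem a hx)
  -- flatten of map τ is empty or bow-starting
  have hF : ∀ ws : List L, (ws.map τ).flatten = [] ∨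
      ∃ b ∈ Vbow, ∃ t, (ws.map τ).flatten = b :: t := by
    intro ws
    cases ws with
    | nil => exact Or.inl rfl
    | cons w ws =>
      obtain ⟨b, hb, l, hτw, -⟩ := hτshape w
      exact Or.inr ⟨b, hb, l ++ (ws.map τ).flatten, by simp [hτw]⟩
  -- injectivity of flatten ∘ map τ
  have hFinj : ∀ ws1 ws2 : List L,
      (ws1.map τ).flatten = (ws2.map τ).flatten → ws1 = ws2 := by
    intro ws1
    induction ws1 with
    | nil =>
      intro ws2 heq
      cases ws2 with
      | nil => rfl
      | cons w ws =>
        exfalso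
        obtain ⟨b, hb, l, hτw, -⟩ := hτshape w
        simp [hτw] at heq
    | cons w1 ws1 ih =>
      intro ws2 heq
      cases ws2 with
      | nil =>
        exfalso
        obtain ⟨b, hb, l, hτw, -⟩ := hτshape w1
        simp [hτw] at heq
      | cons w2 ws2 =>
        obtain ⟨b1, hb1, l1, hτw1, hl1⟩ := hτshape w1
        obtain ⟨b2, hb2, l2, hτw2, hl2⟩ := hτshape w2
        simp only [List.map_cons, List.flatten_cons, hτw1, hτw2,
          List.cons_append] at heq
        obtain ⟨rfl, heq'⟩ := List.cons.inj heq
        obtain ⟨hl, hflat⟩ := split_mid_bow Vbow Vmid hdisj l1 l2 _ _ hl1 hl2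
          (hF ws1) (hF ws2) heq'
        have : w1 = w2 := hτ (by rw [hτw1, hτw2, hl])
        rw [this, ih ws2 hflat]
  -- main proof
  intro s1 s2 heq
  cases s1 with
  | nil =>
    cases s2 with
    | nil => rfl
    | cons w ws =>
      exfalso
      have hne := (hmidshape w).1
      simp only [firstUnmarkedExt] at heq
      exact hne (List.append_eq_nil_iff.mp heq.symm).1
  | cons w1 ws1 =>
    cases s2 with
    | nil =>
      exfalso
      have hne := (hmidshape w1).1
      simp only [firstUnmarkedExt] at heq
      exact hne (List.append_eq_nil_iff.mp heq).1
    | cons w2 ws2 =>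
      simp only [firstUnmarkedExt] at heq
      obtain ⟨hmid, hflat⟩ := split_mid_bow Vbow Vmid hdisj (τmid w1) (τmid w2) _ _
        (hmidshape w1).2 (hmidshape w2).2 (hF ws1) (hF ws2) heq
      rw [hτmid hmid, hFinj ws1 ws2 hflat]
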